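/- Let δ > 1 and V₁ > 0. Then there exists a nonempty open set U ⊆ ℝ² such that every differentiable solution r : [0, ∞) → ℝ² of the two-dimensional ring system with r(0) ∈ U satisfies ‖r(t)‖ → ∞ as t → ∞. -/

import Mathlib

open Filter

/-- For `δ > 1` and `V₁ > 0`, there is a nonempty open set of initial
conditions from which every solution of the two-dimensional ring system
blows up in norm as `t → ∞`. -/
theorem stmt5 (δ V₁ : ℝ) (hδ : 1 < δ) (hV : 0 < V₁) :
    ∃ U : Set (ℝ × ℝ), IsOpen U ∧ U.Nonempty ∧
      ∀ r₁ r₂ : ℝ → ℝ,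
        (∀ t ≥ (0 : ℝ), HasDerivAt r₁ (-r₁ t + max (δ * (r₁ t - r₂ t) + V₁) 0) t) →
        (∀ t ≥ (0 : ℝ), HasDerivAt r₂ (-r₂ t + max (δ * (r₂ t - r₁ t)) 0) t) →
        (r₁ 0, r₂ 0) ∈ U →
        Tendsto (fun t => ‖(r₁ t, r₂ t)‖) atTop atTop := by
  refine ⟨{p : ℝ × ℝ | p.2 < p.1}, isOpen_lt continuous_snd continuous_fst,
    ⟨(1, 0), by norm_num⟩, ?_⟩
  intro r₁ r₂ h1 h2 h0
  have hs0 : 0 < r₁ 0 - r₂ 0 := sub_pos.mpr h0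
  set c : ℝ := δ - 1 with hcdef
  have hc : 0 < c := sub_pos.mpr hδ
  set s : ℝ → ℝ := fun t => r₁ t - r₂ t with hsdef
  set d : ℝ → ℝ := fun t =>
    (-r₁ t + max (δ * (r₁ t - r₂ t) + V₁) 0) - (-r₂ t + max (δ * (r₂ t - r₁ t)) 0) with hddef
  have hsd : ∀ t ∈ Set.Ici (0:ℝ), HasDerivAt s (d t) t := fun t ht =>
    (h1 t ht).sub (h2 t ht)
  have hdge : ∀ t, c * s t ≤ d t := by
    intro t
    have harg : δ * (r₂ t - r₁ t) = -(δ * s t) := by simp [hsdef]; ring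
    rcases le_total (δ * s t) 0 with h | h
    · have m1 : max (-(δ * s t)) 0 = -(δ * s t) := max_eq_left (by linarith)
      have m2 : (0:ℝ) ≤ max (δ * (r₁ t - r₂ t) + V₁) 0 := le_max_right _ _
      simp only [hddef, harg, m1]
      simp only [hsdef] at m2 ⊢
      nlinarith
    · have m1 : max (-(δ * s t)) 0 = 0 := max_eq_right (by linarith)
      have m2 : δ * (r₁ t - r₂ t) + V₁ ≤ max (δ * (r₁ t - r₂ t) + V₁) 0 := le_max_left _ _
      simp only [hddef, harg, m1]
      simp only [hsdef] at m2 ⊢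
      nlinarith
  set g : ℝ → ℝ := fun t => s t * Real.exp (-c * t) with hgdef
  have hgd : ∀ t ∈ Set.Ici (0:ℝ),
      HasDerivAt g ((d t - c * s t) * Real.exp (-c * t)) t := by
    intro t ht
    have he : HasDerivAt (fun u : ℝ => Real.exp (-c * u)) (Real.exp (-c * t) * (-c)) t := by
      have : HasDerivAt (fun u : ℝ => -c * u) (-c) t := by
        simpa using (hasDerivAt_id t).const_mul (-c)
      exact this.exp
    have := (hsd t ht).mul he
    exact this.congr_deriv (by ring)
  have hmono : MonotoneOn g (Set.Ici 0) := by
    apply monotoneOn_of_deriv_nonneg (convex_Ici 0)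
    · exact fun t ht => (hgd t ht).continuousAt.continuousWithinAt
    · intro t ht
      rw [interior_Ici] at ht
      exact (hgd t (Set.Ioi_subset_Ici_self ht)).differentiableAt.differentiableWithinAt
    · intro t ht
      rw [interior_Ici] at ht
      rw [(hgd t (Set.Ioi_subset_Ici_self ht)).deriv]
      exact mul_nonneg (by linarith [hdge t]) (Real.exp_pos _).le
  have key : ∀ t ≥ (0:ℝ), s 0 * Real.exp (c * t) ≤ s t := by
    intro t ht
    have hg0 : g 0 ≤ g t := hmono Set.self_mem_Ici ht ht
    have hg0' : s 0 ≤ s t * Real.exp (-c * t) := by simpa [hgdef] using hg0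
    have := mul_le_mul_of_nonneg_right hg0' (Real.exp_pos (c * t)).le
    calc s 0 * Real.exp (c * t) ≤ s t * Real.exp (-c * t) * Real.exp (c * t) := this
      _ = s t := by rw [mul_assoc, ← Real.exp_add]; simp
  have hlim : Tendsto (fun t => s 0 * Real.exp (c * t) / 2) atTop atTop := by
    have h1' : Tendsto (fun t : ℝ => c * t) atTop atTop :=
      Tendsto.const_mul_atTop hc tendsto_id
    have h2' : Tendsto (fun t => Real.exp (c * t)) atTop atTop :=
      Real.tendsto_exp_atTop.comp h1'
    have h3' : Tendsto (fun t => s 0 * Real.exp (c * t)) atTop atTop :=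
      h2'.const_mul_atTop hs0
    exact h3'.atTop_div_const two_pos
  clear_value c s d g
  apply tendsto_atTop_mono' atTop ?_ hlim
  filter_upwards [eventually_ge_atTop (0:ℝ)] with t ht
  have hk := key t ht
  have habs : s t ≤ |r₁ t| + |r₂ t| := by
    rw [hsdef]
    calc r₁ t - r₂ t ≤ |r₁ t - r₂ t| := le_abs_self _
      _ ≤ |r₁ t| + |r₂ t| := abs_sub _ _
  have hnorm : ‖(r₁ t, r₂ t)‖ = max |r₁ t| |r₂ t| := by
    simp [Prod.norm_def, Real.norm_eq_abs]
  have h1' : |r₁ t| ≤ max |r₁ t| |r₂ t| := le_max_left _ _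
  have h2' : |r₂ t| ≤ max |r₁ t| |r₂ t| := le_max_right _ _
  rw [hnorm]
  have h3' : |r₁ t| + |r₂ t| ≤ 2 * (|r₁ t| ⊔ |r₂ t|) := by
    cases le_total |r₁ t| |r₂ t| with
    | inl h => rw [max_eq_right h]; linarith
    | inr h => rw [max_eq_left h]; linarith
  linarith
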